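/- Let Z be an integral domain. In each of the following cases, for every prime element p of Z, the quotient ring Z/pZ is infinite: (i) Z = R[u_1,…,u_r] is a polynomial ring in r ≥ 1 variables over an infinite integral domain R; (ii) Z = R[u_1,…,u_r] is a polynomial ring in r ≥ 2 variables over an arbitrary integral domain R; (iii) Z contains an infinite field. -/

import Mathlib

open Polynomial in
lemma aux_poly_case (S : Type*) [CommRing S] [IsDomain S] [Infinite S]
    (p : S[X]) (hp : Prime p) : Infinite (S[X] ⧸ Ideal.span {p}) := by
  by_cases h : p.natDegree = 0
  · -- p = C c, use powers of X
    have hc : p = C (p.coeff 0) := Polynomial.eq_C_of_natDegree_eq_zero h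
    refine Infinite.of_injective (fun n : ℕ => Ideal.Quotient.mk _ (X ^ n)) ?_
    intro n m hnm
    by_contra hne
    rw [Ideal.Quotient.mk_eq_mk_iff_sub_mem, Ideal.mem_span_singleton, hc,
      Polynomial.C_dvd_iff_dvd_coeff] at hnm
    have := hnm n
    simp [Polynomial.coeff_X_pow, hne, Ne.symm hne] at this
    exact hp.not_unit (hc ▸ (Polynomial.isUnit_C.2 (isUnit_of_dvd_one this)))
  · refine Infinite.of_injective
      (fun a : S => Ideal.Quotient.mk (Ideal.span {p}) (C a)) ?_
    intro a b hab
    by_contra hne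
    rw [Ideal.Quotient.mk_eq_mk_iff_sub_mem, ← Polynomial.C_sub,
      Ideal.mem_span_singleton] at hab
    have hca : (C (a - b) : S[X]) ≠ 0 :=
      Polynomial.C_ne_zero.mpr (sub_ne_zero.2 hne)
    have := Polynomial.natDegree_le_of_dvd hab hca
    simp [Polynomial.natDegree_C] at this
    exact h this

lemma aux_transfer {A B : Type*} [CommRing A] [CommRing B] (e : A ≃+* B) (p : A)
    (h : Infinite (B ⧸ Ideal.span {e p})) : Infinite (A ⧸ Ideal.span {p}) := by
  have hmap : (Ideal.span {p}).map (e : A →+* B) = Ideal.span {e p} := by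
    rw [Ideal.map_span]; simp
  have e2 := Ideal.quotientEquiv (Ideal.span {p}) (Ideal.span {e p}) e hmap.symm
  exact Infinite.of_injective e2.symm e2.symm.injective

lemma aux_mv_case (R : Type*) [CommRing R] [IsDomain R] (n : ℕ)
    [Infinite (MvPolynomial (Fin n) R)]
    (p : MvPolynomial (Fin (n + 1)) R) (hp : Prime p) :
    Infinite (MvPolynomial (Fin (n + 1)) R ⧸ Ideal.span {p}) := by
  set e := (MvPolynomial.finSuccEquiv R n).toRingEquiv
  have hpe : Prime (e p) := (MulEquiv.prime_iff e.toMulEquiv).2 hp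
  exact aux_transfer e p (aux_poly_case _ _ hpe)

theorem infinite_residue_of_prime :
    -- (i) polynomial ring in r ≥ 1 variables over an infinite domain
    (∀ (R : Type) [CommRing R] [IsDomain R] [Infinite R] (r : ℕ), 1 ≤ r →
      ∀ p : MvPolynomial (Fin r) R, Prime p →
        Infinite (MvPolynomial (Fin r) R ⧸ Ideal.span {p})) ∧
    -- (ii) polynomial ring in r ≥ 2 variables over an arbitrary domain
    (∀ (R : Type) [CommRing R] [IsDomain R] (r : ℕ), 2 ≤ r →
      ∀ p : MvPolynomial (Fin r) R, Prime p →
        Infinite (MvPolynomial (Fin r) R ⧸ Ideal.span {p})) ∧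
    -- (iii) a domain containing an infinite field
    (∀ (Z F : Type) [CommRing Z] [IsDomain Z] [Field F] [Infinite F] [Algebra F Z],
      ∀ p : Z, Prime p → Infinite (Z ⧸ Ideal.span {p})) := by
  refine ⟨?_, ?_, ?_⟩
  · intro R _ _ _ r hr p hp
    obtain ⟨n, rfl⟩ : ∃ n, r = n + 1 := ⟨r - 1, by omega⟩
    exact aux_mv_case R n p hp
  · intro R _ _ r hr p hp
    obtain ⟨n, rfl⟩ : ∃ n, r = n + 1 := ⟨r - 1, by omega⟩
    haveI : Nonempty (Fin n) := ⟨⟨0, by omega⟩⟩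
    exact aux_mv_case R n p hp
  · intro Z F _ _ _ _ _ p hp
    have hne : Ideal.span {p} ≠ ⊤ :=
      fun h => hp.not_unit (Ideal.span_singleton_eq_top.mp h)
    haveI := Ideal.Quotient.nontrivial_iff.mpr hne
    exact Infinite.of_injective _
      (((Ideal.Quotient.mk (Ideal.span {p})).comp (algebraMap F Z)).injective)
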